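/- Let a ∈ ℝ and let A < ∞ be such that the Hardy inequality over (a,∞) holds with constant A, i.e. for every F ∈ 𝓕, ∫_{(a,∞)} (F(x) − F(a))² dm(x) ≤ A · ∫_{(a,∞)} (dF/dS)²(t) dS(t). Then B⁺ₐ ≤ A; equivalently, for every r > a, (S(r) − S(a))·m((r,∞)) ≤ A. -/

import Mathlib

open MeasureTheory Set
open scoped ENNReal

lemma aux_minmax (u v p q : ℝ) (huv : u ≤ v) (hpq : p ≤ q) :
    (min v q - min v p) - (min u q - min u p) = max (min v q - max u p) 0 := by
  simp only [min_def, max_def]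
  split_ifs <;> linarith


/-- If the Hardy inequality over `(a,∞)` holds with a (finite) constant `A`,
then `B⁺ₐ ≤ A`; equivalently, for every `r > a`, `(S(r) − S(a)) · m((r,∞)) ≤ A`. -/
theorem hardy_lower_bound_right
    (S : ℝ → ℝ) (hScont : Continuous S) (hSmono : StrictMono S)
    (hStop : Filter.Tendsto S Filter.atTop Filter.atTop)
    (hSbot : Filter.Tendsto S Filter.atBot Filter.atBot)
    (μS : Measure ℝ)
    (hμS : ∀ c d : ℝ, c ≤ d → μS (Ioc c d) = ENNReal.ofReal (S d - S c))
    (m : Measure ℝ) [IsFiniteMeasure m]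
    (a : ℝ) (A : ℝ)
    (hHardy : ∀ F f : ℝ → ℝ, MemLp F 2 m → Integrable f μS → MemLp f 2 μS →
      (∀ c d : ℝ, c < d → F d - F c = ∫ t in Ioc c d, f t ∂μS) →
      ∫⁻ x in Ioi a, ENNReal.ofReal ((F x - F a) ^ 2) ∂m ≤
        ENNReal.ofReal A * ∫⁻ t in Ioi a, ENNReal.ofReal (f t ^ 2) ∂μS) :
    (⨆ x ∈ Ici a, m (Ioi x) * ENNReal.ofReal (S x - S a)) ≤ ENNReal.ofReal A ∧
      ∀ r : ℝ, a < r →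
        ENNReal.ofReal (S r - S a) * m (Ioi r) ≤ ENNReal.ofReal A := by
  have main : ∀ r : ℝ, a < r →
      ENNReal.ofReal (S r - S a) * m (Ioi r) ≤ ENNReal.ofReal A := by
    intro r har
    set F : ℝ → ℝ := fun x => min (S x) (S r) - min (S x) (S a) with hFdef
    set f : ℝ → ℝ := (Ioc a r).indicator (fun _ => (1:ℝ)) with hfdef
    have hSa_le : S a ≤ S r := (hSmono har).le
    have hμfin : μS (Ioc a r) = ENNReal.ofReal (S r - S a) := hμS a r har.le
    -- F is bounded and continuous
    have hFcont : Continuous F := by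
      apply Continuous.sub <;> exact Continuous.min hScont continuous_const
    have hFbound : ∀ x, ‖F x‖ ≤ S r - S a := by
      intro x
      rw [Real.norm_eq_abs, abs_le]
      constructor
      · have : min (S x) (S a) ≤ min (S x) (S r) :=
          min_le_min le_rfl hSa_le
        simp only [hFdef]; linarith
      · rcases le_total (S x) (S a) with h | h
        · simp only [hFdef, min_eq_left h, min_eq_left (h.trans hSa_le)]; linarith
        · simp only [hFdef, min_eq_right h]
          have : min (S x) (S r) ≤ S r := min_le_right _ _
          linarith
    have hFmem : MemLp F 2 m :=
      MemLp.of_bound hFcont.aestronglyMeasurable (S r - S a)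
        (Filter.Eventually.of_forall hFbound)
    have hfint : Integrable f μS := by
      rw [hfdef, integrable_indicator_iff measurableSet_Ioc]
      exact integrableOn_const (by rw [hμfin]; exact ENNReal.ofReal_ne_top)
    have hfmem : MemLp f 2 μS := by
      rw [hfdef]
      exact memLp_indicator_const 2 measurableSet_Ioc 1
        (Or.inr (by rw [hμfin]; exact ENNReal.ofReal_ne_top))
    have hFTC : ∀ c d : ℝ, c < d → F d - F c = ∫ t in Ioc c d, f t ∂μS := by
      intro c d hcd
      have hint : ∫ t in Ioc c d, f t ∂μS = (μS (Ioc c d ∩ Ioc a r)).toReal := by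
        rw [hfdef, setIntegral_indicator measurableSet_Ioc]
        simp [Measure.restrict_apply, inter_comm, measureReal_def]
      have hinter : Ioc c d ∩ Ioc a r = Ioc (max c a) (min d r) := Ioc_inter_Ioc
      have hFid : F d - F c = max (S (min d r) - S (max c a)) 0 := by
        have := aux_minmax (S c) (S d) (S a) (S r) (hSmono.monotone hcd.le) hSa_le
        simp only [hFdef]
        rw [this, hSmono.monotone.map_min, hSmono.monotone.map_max]
      rw [hFid, hint]
      by_cases h : max c a ≤ min d r
      · rw [show Ioc c d ∩ Ioc a r = Ioc (max c a) (min d r) from Ioc_inter_Ioc,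
          hμS _ _ h, ENNReal.toReal_ofReal (sub_nonneg.mpr (hSmono.monotone h)),
          max_eq_left (sub_nonneg.mpr (hSmono.monotone h))]
      · push_neg at h
        rw [show Ioc c d ∩ Ioc a r = Ioc (max c a) (min d r) from Ioc_inter_Ioc,
          Ioc_eq_empty (not_lt.mpr h.le), measure_empty, ENNReal.toReal_zero,
          max_eq_right (sub_nonpos.mpr (hSmono.monotone h.le))]
    have hineq := hHardy F f hFmem hfint hfmem hFTC
    -- F a = 0
    have hFa : F a = 0 := by
      simp only [hFdef, min_eq_left hSa_le, min_self, sub_self]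
    -- on Ioi r, F x = S r - S a
    have hFx : ∀ x ∈ Ioi r, F x = S r - S a := by
      intro x hx
      have h1 : S r ≤ S x := (hSmono hx).le
      simp only [hFdef, min_eq_right h1, min_eq_right (hSa_le.trans h1)]
    -- lower bound for LHS
    have hLHS : ENNReal.ofReal ((S r - S a) ^ 2) * m (Ioi r) ≤
        ∫⁻ x in Ioi a, ENNReal.ofReal ((F x - F a) ^ 2) ∂m := by
      calc ENNReal.ofReal ((S r - S a) ^ 2) * m (Ioi r)
          = ∫⁻ x in Ioi r, ENNReal.ofReal ((F x - F a) ^ 2) ∂m := by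
            rw [setLIntegral_congr_fun_ae measurableSet_Ioi
              (Filter.Eventually.of_forall (fun x hx => by rw [hFx x hx, hFa, sub_zero]))]
            rw [setLIntegral_const]
        _ ≤ _ := lintegral_mono_set (Ioi_subset_Ioi har.le)
    -- RHS computation
    have hRHS : ∫⁻ t in Ioi a, ENNReal.ofReal (f t ^ 2) ∂μS =
        ENNReal.ofReal (S r - S a) := by
      have heq : ∀ t, ENNReal.ofReal (f t ^ 2) =
          (Ioc a r).indicator (fun _ => (1:ℝ≥0∞)) t := by
        intro t
        by_cases h : t ∈ Ioc a r <;> simp [hfdef, indicator, h]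
      simp only [heq]
      rw [lintegral_indicator measurableSet_Ioc]
      simp [Measure.restrict_restrict measurableSet_Ioc,
        inter_eq_left.mpr Ioc_subset_Ioi_self, hμfin]
    rw [hRHS] at hineq
    have hfinal : ENNReal.ofReal ((S r - S a) ^ 2) * m (Ioi r) ≤
        ENNReal.ofReal A * ENNReal.ofReal (S r - S a) := hLHS.trans hineq
    have hc : (0:ℝ) < S r - S a := sub_pos.mpr (hSmono har)
    have hsq : ENNReal.ofReal ((S r - S a) ^ 2) =
        ENNReal.ofReal (S r - S a) * ENNReal.ofReal (S r - S a) := by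
      rw [sq, ENNReal.ofReal_mul hc.le]
    rw [hsq] at hfinal
    have h2 : ENNReal.ofReal (S r - S a) * m (Ioi r) * ENNReal.ofReal (S r - S a) ≤
        ENNReal.ofReal A * ENNReal.ofReal (S r - S a) := by
      calc ENNReal.ofReal (S r - S a) * m (Ioi r) * ENNReal.ofReal (S r - S a)
          = ENNReal.ofReal (S r - S a) * ENNReal.ofReal (S r - S a) * m (Ioi r) := by ring
        _ ≤ _ := hfinal
    exact (ENNReal.mul_le_mul_iff_left (ne_of_gt (ENNReal.ofReal_pos.mpr hc)) ENNReal.ofReal_ne_top).mp h2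
  refine ⟨?_, main⟩
  refine iSup₂_le fun x hx => ?_
  rcases eq_or_lt_of_le (mem_Ici.mp hx) with h | h
  · simp [← h]
  · rw [mul_comm]; exact main x h
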